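/- Let A be an algebra with finite congruence lattice D = Con(A) such that Princ(A) corresponds to J(D) ∪ {0, 1, ε} for some element ε ∈ D. Suppose α, β ∈ J(D) satisfy: every join-irreducible congruence of D lies below α or below β; α ≰ ε ∨ β; and β ≰ ε ∨ α. Then for every block U of the congruence ε, either U × U ⊆ α or U × U ⊆ β. -/

import Mathlib

set_option linter.unusedVariables false

/-- A general (finitary, one-sorted) algebra. -/
structure Alg : Type 1 where
  carrier : Type
  ι : Type
  arity : ι → ℕ
  ops : ∀ i : ι, (Fin (arity i) → carrier) → carrier

/-- A congruence of an algebra: an equivalence relation compatible with all operations. -/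
def IsCong (A : Alg) (r : A.carrier → A.carrier → Prop) : Prop :=
  Equivalence r ∧ ∀ (i : A.ι) (x y : Fin (A.arity i) → A.carrier),
    (∀ j, r (x j) (y j)) → r (A.ops i x) (A.ops i y)

/-- The congruences of an algebra `A`. -/
def AlgCon (A : Alg) : Type := {r : A.carrier → A.carrier → Prop // IsCong A r}

instance (A : Alg) : PartialOrder (AlgCon A) where
  le r s := ∀ a b, r.1 a b → s.1 a b
  le_refl r a b h := h
  le_trans r s t h1 h2 a b h := h2 a b (h1 a b h)
  le_antisymm r s h1 h2 := Subtype.ext (by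
    funext a b
    exact propext ⟨h1 a b, h2 a b⟩)

instance (A : Alg) : InfSet (AlgCon A) where
  sInf S := ⟨fun a b => ∀ r ∈ S, r.1 a b,
    ⟨⟨fun a r _ => r.2.1.refl a,
      fun h r hr => r.2.1.symm (h r hr),
      fun h1 h2 r hr => r.2.1.trans (h1 r hr) (h2 r hr)⟩,
     fun i x y h r hr => r.2.2 i x y (fun j => h j r hr)⟩⟩

instance (A : Alg) : CompleteLattice (AlgCon A) :=
  completeLatticeOfInf _ (fun S =>
    ⟨fun r hr a b h => h r hr, fun r hr a b h s hs => hr hs a b h⟩)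

/-- The principal congruence generated by the pair `(a, b)`. -/
def algPrinc (A : Alg) (a b : A.carrier) : AlgCon A := sInf {r : AlgCon A | r.1 a b}

/-- The set of principal congruences of `A`. -/
def AlgPrinc (A : Alg) : Set (AlgCon A) := {θ | ∃ a b, θ = algPrinc A a b}

/- ------------------------------------------------------------------ -/
/- Auxiliary lemmas                                                    -/
/- ------------------------------------------------------------------ -/

section Aux

variable {A : Alg}

private lemma rel_of_le {θ ρ : AlgCon A} (h : θ ≤ ρ) {a b : A.carrier} (hab : θ.1 a b) :
    ρ.1 a b := h a b hab

private lemma princ_rel (a b : A.carrier) : (algPrinc A a b).1 a b :=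
  fun _ hr => hr

private lemma princ_le {a b : A.carrier} {r : AlgCon A} :
    algPrinc A a b ≤ r ↔ r.1 a b :=
  ⟨fun h => h a b (princ_rel a b), fun h => sInf_le h⟩

private lemma princ_symm (a b : A.carrier) : algPrinc A a b = algPrinc A b a := by
  apply le_antisymm
  · exact princ_le.mpr ((algPrinc A b a).2.1.symm (princ_rel b a))
  · exact princ_le.mpr ((algPrinc A a b).2.1.symm (princ_rel a b))

/-- Triangle inequality for principal congruences. -/
private lemma princ_tri (u v w : A.carrier) :
    algPrinc A u w ≤ algPrinc A u v ⊔ algPrinc A v w := by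
  apply princ_le.mpr
  exact (algPrinc A u v ⊔ algPrinc A v w).2.1.trans
    (rel_of_le (le_sup_left : algPrinc A u v ≤ _) (princ_rel u v))
    (rel_of_le (le_sup_right : algPrinc A v w ≤ _) (princ_rel v w))

/-- Variant of the triangle inequality. -/
private lemma princ_tri' (m n x : A.carrier) :
    algPrinc A m n ≤ algPrinc A m x ⊔ algPrinc A n x := by
  apply princ_le.mpr
  exact (algPrinc A m x ⊔ algPrinc A n x).2.1.trans
    (rel_of_le (le_sup_left : algPrinc A m x ≤ _) (princ_rel m x))
    ((algPrinc A m x ⊔ algPrinc A n x).2.1.symm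
      (rel_of_le (le_sup_right : algPrinc A n x ≤ _) (princ_rel n x)))

private def fullCon (A : Alg) : AlgCon A :=
  ⟨fun _ _ => True,
    ⟨⟨fun _ => trivial, fun _ => trivial, fun _ _ => trivial⟩, fun _ _ _ _ => trivial⟩⟩

private lemma top_rel (a b : A.carrier) : (⊤ : AlgCon A).1 a b :=
  rel_of_le (le_top : fullCon A ≤ ⊤) trivial

/- The join of two congruences, described concretely as the reflexive-transitive
closure of the union of the two relations. -/

private def stepRel (θ ρ : AlgCon A) : A.carrier → A.carrier → Prop :=
  fun u v => θ.1 u v ∨ ρ.1 u v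

private lemma joinCong_isCong (θ ρ : AlgCon A) :
    IsCong A (Relation.ReflTransGen (stepRel θ ρ)) := by
  have hsym : Symmetric (stepRel θ ρ) := by
    rintro a b (h | h)
    · exact Or.inl (θ.2.1.symm h)
    · exact Or.inr (ρ.2.1.symm h)
  refine ⟨⟨fun a => .refl, fun h => (@Relation.ReflTransGen.stdSymm _ _ ⟨fun _ _ h => hsym h⟩).symm _ _ h,
      fun h1 h2 => h1.trans h2⟩, ?_⟩
  intro i xs ys h
  have key : ∀ l : ℕ, l ≤ A.arity i →
      Relation.ReflTransGen (stepRel θ ρ)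
        (A.ops i xs) (A.ops i (fun j => if (j : ℕ) < l then ys j else xs j)) := by
    intro l
    induction l with
    | zero =>
      intro _
      have e : (fun j : Fin (A.arity i) => if (j : ℕ) < 0 then ys j else xs j) = xs := by
        funext j; simp
      rw [e]
    | succ l IH =>
      intro hl
      have hlk : l < A.arity i := hl
      have h1 := IH hlk.le
      let j0 : Fin (A.arity i) := ⟨l, hlk⟩
      let g : Fin (A.arity i) → A.carrier := fun j => if (j : ℕ) < l then ys j else xs j
      have lifted :
          Relation.ReflTransGen (stepRel θ ρ)
            (A.ops i (Function.update g j0 (xs j0))) (A.ops i (Function.update g j0 (ys j0))) := by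
        refine Relation.ReflTransGen.lift (fun u => A.ops i (Function.update g j0 u)) ?_ _ _ (h j0)
        rintro a b (hab | hab)
        · refine Or.inl (θ.2.2 i _ _ ?_)
          intro j
          rcases eq_or_ne j j0 with rfl | hj
          · simpa [Function.update_apply] using hab
          · simp only [Function.update_apply, if_neg hj]
            exact θ.2.1.refl _
        · refine Or.inr (ρ.2.2 i _ _ ?_)
          intro j
          rcases eq_or_ne j j0 with rfl | hj
          · simpa [Function.update_apply] using hab
          · simp only [Function.update_apply, if_neg hj]
            exact ρ.2.1.refl _
      have e1 : Function.update g j0 (xs j0) = g := by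
        funext j
        rcases eq_or_ne j j0 with rfl | hj
        · simp only [Function.update_apply, if_pos rfl]
          show xs j0 = if (j0 : ℕ) < l then ys j0 else xs j0
          rw [if_neg (by exact Nat.lt_irrefl l)]
        · simp only [Function.update_apply, if_neg hj]
      have e2 : Function.update g j0 (ys j0) =
          (fun j : Fin (A.arity i) => if (j : ℕ) < l + 1 then ys j else xs j) := by
        funext j
        rcases eq_or_ne j j0 with rfl | hj
        · simp only [Function.update_apply, if_pos rfl]
          show ys j0 = if (j0 : ℕ) < l + 1 then ys j0 else xs j0
          rw [if_pos (Nat.lt_succ_self l)]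
        · have hjl : (j : ℕ) ≠ l := by
            intro hc
            exact hj (Fin.ext hc)
          simp only [Function.update_apply, if_neg hj]
          show (if (j : ℕ) < l then ys j else xs j) = if (j : ℕ) < l + 1 then ys j else xs j
          rcases Nat.lt_or_ge (j : ℕ) l with h' | h'
          · rw [if_pos h', if_pos (Nat.lt_succ_of_lt h')]
          · rw [if_neg (Nat.not_lt.mpr h'), if_neg (by omega)]
      rw [e1, e2] at lifted
      exact h1.trans lifted
  have fin := key (A.arity i) le_rfl
  have e : (fun j : Fin (A.arity i) => if (j : ℕ) < A.arity i then ys j else xs j) = ys := by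
    funext j; rw [if_pos j.isLt]
  rwa [e] at fin

private def joinCong (θ ρ : AlgCon A) : AlgCon A :=
  ⟨Relation.ReflTransGen (stepRel θ ρ), joinCong_isCong θ ρ⟩

private lemma sup_le_joinCong (θ ρ : AlgCon A) : θ ⊔ ρ ≤ joinCong θ ρ := by
  apply sup_le
  · exact fun a b hab => Relation.ReflTransGen.single (Or.inl hab)
  · exact fun a b hab => Relation.ReflTransGen.single (Or.inr hab)

end Aux

/-- Suppose the set of principal congruences of an algebra `A` with finite
congruence lattice `D` is exactly `J(D) ∪ {⊥, ⊤, ε}`, and `α, β ∈ J(D)` are such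
that every join-irreducible congruence lies below `α` or below `β`, with
`α ≰ ε ⊔ β` and `β ≰ ε ⊔ α`. Then every block of `ε` is contained in a single
block of `α` or in a single block of `β`. -/
theorem stmt_13 (A : Alg) [Finite (AlgCon A)] (ε α β : AlgCon A)
    (hPrinc : AlgPrinc A = {θ : AlgCon A | SupIrred θ} ∪ {⊥, ⊤, ε})
    (hα : SupIrred α) (hβ : SupIrred β)
    (hmax : ∀ γ : AlgCon A, SupIrred γ → γ ≤ α ∨ γ ≤ β)
    (hαε : ¬ α ≤ ε ⊔ β) (hβε : ¬ β ≤ ε ⊔ α) :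
    ∀ a : A.carrier,
      (∀ x y : A.carrier, ε.1 a x → ε.1 a y → α.1 x y) ∨
      (∀ x y : A.carrier, ε.1 a x → ε.1 a y → β.1 x y) := by
  -- The key claim is that `ε ≤ α` or `ε ≤ β`; the theorem then follows easily.
  have crux : ε ≤ α ∨ ε ≤ β := by
    by_contra hcon
    push_neg at hcon
    obtain ⟨hεα, hεβ⟩ := hcon
    -- `ε` and `⊤` are principal congruences.
    have hεP : ε ∈ AlgPrinc A := by
      rw [hPrinc]; right; simp
    have hTP : (⊤ : AlgCon A) ∈ AlgPrinc A := by
      rw [hPrinc]; right; simp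
    obtain ⟨x, y, hxy⟩ := hεP
    obtain ⟨m, n, hmn⟩ := hTP
    -- `φ := ε ⊔ α` and `ψ := ε ⊔ β` are proper.
    set φ : AlgCon A := ε ⊔ α with hφ
    set ψ : AlgCon A := ε ⊔ β with hψ
    have hφtop : φ ≠ ⊤ := by
      intro h
      exact hβε (h ▸ le_top)
    have hψtop : ψ ≠ ⊤ := by
      intro h
      exact hαε (h ▸ le_top)
    -- Every principal congruence is `≤ α`, `≤ β`, `= ε` or `= ⊤`.
    have classify : ∀ u v : A.carrier,
        algPrinc A u v ≤ α ∨ algPrinc A u v ≤ β ∨ algPrinc A u v = ε ∨ algPrinc A u v = ⊤ := by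
      intro u v
      have hmem : algPrinc A u v ∈ AlgPrinc A := ⟨u, v, rfl⟩
      rw [hPrinc] at hmem
      simp only [Set.mem_union, Set.mem_setOf_eq, Set.mem_insert_iff,
        Set.mem_singleton_iff] at hmem
      rcases hmem with hirr | hbot | htop | hε
      · rcases hmax _ hirr with h | h
        · exact Or.inl h
        · exact Or.inr (Or.inl h)
      · exact Or.inl (hbot ▸ bot_le)
      · exact Or.inr (Or.inr (Or.inr htop))
      · exact Or.inr (Or.inr (Or.inl hε))
    -- Dichotomy: every principal congruence `con(w, x)` is below `φ ⊓ ψ` or equals `⊤`.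
    have dich : ∀ w : A.carrier, algPrinc A w x ≤ φ ⊓ ψ ∨ algPrinc A w x = ⊤ := by
      intro w
      have hεle : ε ≤ φ ⊓ ψ := le_inf le_sup_left le_sup_left
      rcases classify w x with hwx | hwx | hwx | hwx
      · -- con(w,x) ≤ α
        rcases classify w y with hwy | hwy | hwy | hwy
        · -- con(w,y) ≤ α: then ε = con(x,y) ≤ con(x,w) ⊔ con(w,y) ≤ α, contradiction.
          exfalso
          apply hεα
          calc ε = algPrinc A x y := hxy
            _ ≤ algPrinc A x w ⊔ algPrinc A w y := princ_tri x w y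
            _ ≤ α ⊔ α := sup_le_sup (by rw [princ_symm x w]; exact hwx) hwy
            _ = α := sup_idem α
        · -- con(w,y) ≤ β: then con(w,x) ≤ con(w,y) ⊔ con(y,x) ≤ β ⊔ ε = ψ.
          left
          refine le_inf (hwx.trans le_sup_right) ?_
          calc algPrinc A w x ≤ algPrinc A w y ⊔ algPrinc A y x := princ_tri w y x
            _ ≤ β ⊔ ε := sup_le_sup hwy (by rw [princ_symm y x, ← hxy])
            _ ≤ ψ := sup_le le_sup_right le_sup_left
        · -- con(w,y) = ε
          left
          have : algPrinc A w x ≤ ε := by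
            calc algPrinc A w x ≤ algPrinc A w y ⊔ algPrinc A y x := princ_tri w y x
              _ ≤ ε ⊔ ε := sup_le_sup (le_of_eq hwy) (by rw [princ_symm y x, ← hxy])
              _ = ε := sup_idem ε
          exact this.trans hεle
        · -- con(w,y) = ⊤: then ⊤ ≤ con(w,x) ⊔ ε ≤ α ⊔ ε = φ, contradiction.
          exfalso
          apply hφtop
          apply top_unique
          calc (⊤ : AlgCon A) = algPrinc A w y := hwy.symm
            _ ≤ algPrinc A w x ⊔ algPrinc A x y := princ_tri w x y
            _ ≤ α ⊔ ε := sup_le_sup hwx (le_of_eq hxy.symm)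
            _ ≤ φ := sup_le le_sup_right le_sup_left
      · -- con(w,x) ≤ β: mirror case.
        rcases classify w y with hwy | hwy | hwy | hwy
        · -- con(w,y) ≤ α: then con(w,x) ≤ α ⊔ ε = φ.
          left
          refine le_inf ?_ (hwx.trans le_sup_right)
          calc algPrinc A w x ≤ algPrinc A w y ⊔ algPrinc A y x := princ_tri w y x
            _ ≤ α ⊔ ε := sup_le_sup hwy (by rw [princ_symm y x, ← hxy])
            _ ≤ φ := sup_le le_sup_right le_sup_left
        · -- con(w,y) ≤ β: then ε ≤ β, contradiction.
          exfalso
          apply hεβ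
          calc ε = algPrinc A x y := hxy
            _ ≤ algPrinc A x w ⊔ algPrinc A w y := princ_tri x w y
            _ ≤ β ⊔ β := sup_le_sup (by rw [princ_symm x w]; exact hwx) hwy
            _ = β := sup_idem β
        · -- con(w,y) = ε
          left
          have : algPrinc A w x ≤ ε := by
            calc algPrinc A w x ≤ algPrinc A w y ⊔ algPrinc A y x := princ_tri w y x
              _ ≤ ε ⊔ ε := sup_le_sup (le_of_eq hwy) (by rw [princ_symm y x, ← hxy])
              _ = ε := sup_idem ε
          exact this.trans hεle
        · -- con(w,y) = ⊤: then ⊤ ≤ β ⊔ ε = ψ, contradiction.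
          exfalso
          apply hψtop
          apply top_unique
          calc (⊤ : AlgCon A) = algPrinc A w y := hwy.symm
            _ ≤ algPrinc A w x ⊔ algPrinc A x y := princ_tri w x y
            _ ≤ β ⊔ ε := sup_le_sup hwx (le_of_eq hxy.symm)
            _ ≤ ψ := sup_le le_sup_right le_sup_left
      · exact Or.inl (hwx ▸ hεle)
      · exact Or.inr hwx
    -- Every congruence is below `α ⊔ β` (finite lattice: joins of join-irreducibles).
    have hab : ∀ c : AlgCon A, c ≤ α ⊔ β := by
      intro c
      induction c using WellFoundedLT.induction with
      | ind c IH =>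
        by_cases hc : SupIrred c
        · rcases hmax c hc with h | h
          · exact h.trans le_sup_left
          · exact h.trans le_sup_right
        · rw [SupIrred] at hc
          push_neg at hc
          by_cases hmin : IsMin c
          · exact (hmin bot_le).trans bot_le
          · obtain ⟨b, d, hbd, hb, hd⟩ := hc hmin
            have hblt : b < c := lt_of_le_of_ne (hbd ▸ le_sup_left) hb
            have hdlt : d < c := lt_of_le_of_ne (hbd ▸ le_sup_right) hd
            calc c = b ⊔ d := hbd.symm
              _ ≤ (α ⊔ β) ⊔ (α ⊔ β) := sup_le_sup (IH b hblt) (IH d hdlt)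
              _ = α ⊔ β := sup_idem _
    -- Hence `⊤ ≤ φ ⊔ ψ`, and the join is realized by chains of `φ`/`ψ`-steps.
    have htople : (⊤ : AlgCon A) ≤ φ ⊔ ψ :=
      (hab ⊤).trans (sup_le_sup le_sup_right le_sup_right)
    -- Chain induction: anything connected to `x` by a `φ/ψ`-chain has small `con(·, x)`.
    have chain : ∀ w : A.carrier, Relation.ReflTransGen (stepRel φ ψ) w x →
        algPrinc A w x ≤ φ ⊓ ψ := by
      intro w hw
      induction hw using Relation.ReflTransGen.head_induction_on with
      | refl =>
        exact princ_le.mpr ((φ ⊓ ψ).2.1.refl x)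
      | head h' hrest IH =>
        rename_i a c
        rcases h' with hstep | hstep
        · -- `con(a,c) ≤ φ`, so `con(a,x) ≤ φ ⊔ (φ ⊓ ψ) = φ < ⊤`; dichotomy finishes.
          have hax : algPrinc A a x ≤ φ := by
            calc algPrinc A a x ≤ algPrinc A a c ⊔ algPrinc A c x := princ_tri a c x
              _ ≤ φ ⊔ (φ ⊓ ψ) := sup_le_sup (princ_le.mpr hstep) IH
              _ ≤ φ := sup_le le_rfl inf_le_left
          rcases dich a with h | h
          · exact h
          · exact absurd (top_unique (h ▸ hax)) hφtop
        · have hax : algPrinc A a x ≤ ψ := by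
            calc algPrinc A a x ≤ algPrinc A a c ⊔ algPrinc A c x := princ_tri a c x
              _ ≤ ψ ⊔ (φ ⊓ ψ) := sup_le_sup (princ_le.mpr hstep) IH
              _ ≤ ψ := sup_le le_rfl inf_le_right
          rcases dich a with h | h
          · exact h
          · exact absurd (top_unique (h ▸ hax)) hψtop
    -- Apply the chain lemma to `m` and `n`.
    have hms : Relation.ReflTransGen (stepRel φ ψ) m x :=
      rel_of_le ((htople.trans (sup_le_joinCong φ ψ)) : (⊤ : AlgCon A) ≤ joinCong φ ψ)
        (top_rel m x)
    have hns : Relation.ReflTransGen (stepRel φ ψ) n x :=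
      rel_of_le ((htople.trans (sup_le_joinCong φ ψ)) : (⊤ : AlgCon A) ≤ joinCong φ ψ)
        (top_rel n x)
    have hfinal : (⊤ : AlgCon A) ≤ φ ⊓ ψ := by
      calc (⊤ : AlgCon A) = algPrinc A m n := hmn
        _ ≤ algPrinc A m x ⊔ algPrinc A n x := princ_tri' m n x
        _ ≤ (φ ⊓ ψ) ⊔ (φ ⊓ ψ) := sup_le_sup (chain m hms) (chain n hns)
        _ = φ ⊓ ψ := sup_idem _
    exact hφtop (top_unique (hfinal.trans inf_le_left))
  -- Wrap up: a block of `ε` is contained in a single `α`- or `β`-class.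
  intro a
  rcases crux with hc | hc
  · left
    intro u v h1 h2
    exact rel_of_le hc (ε.2.1.trans (ε.2.1.symm h1) h2)
  · right
    intro u v h1 h2
    exact rel_of_le hc (ε.2.1.trans (ε.2.1.symm h1) h2)
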